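/- The Benjamin-Whitham coefficient e_BW(α) = [−4 + 8α² + 8cosh(2α) + 5cosh(4α) + 2α(−9coth(α) + 18α csch²(2α) − 2sinh(4α) + 3tanh(α))] / [(−1 + 8α² + cosh(4α) − 4α sinh(4α)) tanh(α)^{3/2}] tends to 1 as α → ∞. -/

import Mathlib

open Real Filter

/-- The Benjamin-Whitham coefficient `e_BW(α)`. -/
noncomputable def eBW (α : ℝ) : ℝ :=
  (-4 + 8 * α ^ 2 + 8 * Real.cosh (2 * α) + 5 * Real.cosh (4 * α)
    + 2 * α * (-9 * (Real.cosh α / Real.sinh α)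
        + 18 * α * ((Real.sinh (2 * α))⁻¹) ^ 2
        - 2 * Real.sinh (4 * α) + 3 * Real.tanh α)) /
  ((-1 + 8 * α ^ 2 + Real.cosh (4 * α) - 4 * α * Real.sinh (4 * α))
    * Real.tanh α ^ ((3 : ℝ) / 2))

lemma eBW_exp_lim (c : ℝ) (hc : 0 < c) :
    Tendsto (fun α : ℝ => Real.exp (-(c * α))) atTop (nhds 0) :=
  Real.tendsto_exp_neg_atTop_nhds_zero.comp (tendsto_id.const_mul_atTop hc)

lemma eBW_mul_exp_lim (c : ℝ) (hc : 0 < c) :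
    Tendsto (fun α : ℝ => α * Real.exp (-(c * α))) atTop (nhds 0) := by
  have h := ((Real.tendsto_pow_mul_exp_neg_atTop_nhds_zero 1).comp
    (tendsto_id.const_mul_atTop hc (f := fun x : ℝ => x))).const_mul c⁻¹
  rw [mul_zero] at h
  refine h.congr fun α => ?_
  simp only [Function.comp, pow_one, id]
  field_simp

lemma eBW_tanh_lim : Tendsto Real.tanh atTop (nhds 1) := by
  have key : ∀ α : ℝ, Real.tanh α = (1 - Real.exp (-(2*α))) / (1 + Real.exp (-(2*α))) := by
    intro α
    have h1 : Real.exp α * Real.exp (-α) = 1 := by rw [← Real.exp_add]; simp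
    have h2 : Real.exp (-(2*α)) = Real.exp (-α) * Real.exp (-α) := by
      rw [← Real.exp_add]; ring_nf
    have hc : Real.cosh α ≠ 0 := ne_of_gt (Real.cosh_pos α)
    have hd : 1 + Real.exp (-(2*α)) > 0 := by positivity
    rw [Real.tanh_eq_sinh_div_cosh, Real.sinh_eq, Real.cosh_eq]
    rw [Real.cosh_eq] at hc
    field_simp
    have h3 : Real.exp (-(α*2)) = Real.exp (-(2*α)) := by ring_nf
    linear_combination 2 * Real.exp α * h2 + 2 * Real.exp (-α) * h1 + 2 * Real.exp α * h3
  have h := eBW_exp_lim 2 (by norm_num)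
  have h2 : Tendsto (fun α : ℝ => (1 - Real.exp (-(2*α))) / (1 + Real.exp (-(2*α)))) atTop
      (nhds ((1 - 0) / (1 + 0))) :=
    Tendsto.div (tendsto_const_nhds.sub h) (tendsto_const_nhds.add h) (by norm_num)
  norm_num at h2
  exact h2.congr fun α => (key α).symm

set_option maxHeartbeats 2000000 in
lemma eBW_eqN (α : ℝ) (hα : 0 < α) :
    (-4 + 8 * α ^ 2 + 8 * Real.cosh (2 * α) + 5 * Real.cosh (4 * α)
      + 2 * α * (-9 * (Real.cosh α / Real.sinh α)
          + 18 * α * ((Real.sinh (2 * α))⁻¹) ^ 2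
          - 2 * Real.sinh (4 * α) + 3 * Real.tanh α)) * (Real.exp (-(4*α)) * α⁻¹)
    =
    -4 * (Real.exp (-(4*α)) * α⁻¹)
    + 8 * (α * Real.exp (-(4*α)))
    + 8 * ((Real.exp (-(2*α)) + Real.exp (-(6*α)))/2) * α⁻¹
    + 5 * ((1 + Real.exp (-(8*α)))/2) * α⁻¹
    + 2 * (-9 * ((1 + Real.exp (-(2*α))) / (1 - Real.exp (-(2*α)))) * Real.exp (-(4*α))
        + 72 * (α * Real.exp (-(8*α))) / (1 - Real.exp (-(4*α)))^2
        - 2 * ((1 - Real.exp (-(8*α)))/2)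
        + 3 * Real.tanh α * Real.exp (-(4*α))) := by
  have he1 : 1 < Real.exp α := by simpa using Real.exp_lt_exp.mpr hα
  set e := Real.exp α with hedef
  have he0 : 0 < e := lt_trans one_pos he1
  have hE2 : Real.exp (2*α) = e^2 := by rw [two_mul, Real.exp_add]; ring
  have hE4 : Real.exp (4*α) = e^4 := by
    have h : (4:ℝ)*α = 2*α + 2*α := by ring
    rw [h, Real.exp_add, hE2]; ring
  have hE6 : Real.exp (6*α) = e^6 := by
    have h : (6:ℝ)*α = 4*α + 2*α := by ring
    rw [h, Real.exp_add, hE4, hE2]; ring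
  have hE8 : Real.exp (8*α) = e^8 := by
    have h : (8:ℝ)*α = 4*α + 4*α := by ring
    rw [h, Real.exp_add, hE4]; ring
  have hm1 : Real.exp (-α) = e⁻¹ := by rw [Real.exp_neg]
  have hm2 : Real.exp (-(2*α)) = (e^2)⁻¹ := by rw [Real.exp_neg, hE2]
  have hm4 : Real.exp (-(4*α)) = (e^4)⁻¹ := by rw [Real.exp_neg, hE4]
  have hm6 : Real.exp (-(6*α)) = (e^6)⁻¹ := by rw [Real.exp_neg, hE6]
  have hm8 : Real.exp (-(8*α)) = (e^8)⁻¹ := by rw [Real.exp_neg, hE8]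
  have hsinh : Real.sinh α = (e - e⁻¹)/2 := by rw [Real.sinh_eq, hm1]
  have hsinh2 : Real.sinh (2*α) = (e^2 - (e^2)⁻¹)/2 := by
    rw [Real.sinh_eq, hE2, Real.exp_neg, hE2]
  have hsinh4 : Real.sinh (4*α) = (e^4 - (e^4)⁻¹)/2 := by
    rw [Real.sinh_eq, hE4, Real.exp_neg, hE4]
  have hcosh : Real.cosh α = (e + e⁻¹)/2 := by rw [Real.cosh_eq, hm1]
  have hcosh2 : Real.cosh (2*α) = (e^2 + (e^2)⁻¹)/2 := by
    rw [Real.cosh_eq, hE2, Real.exp_neg, hE2]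
  have hcosh4 : Real.cosh (4*α) = (e^4 + (e^4)⁻¹)/2 := by
    rw [Real.cosh_eq, hE4, Real.exp_neg, hE4]
  have hne : e ≠ 0 := ne_of_gt he0
  have hαne : α ≠ 0 := ne_of_gt hα
  have h1 : e - e⁻¹ ≠ 0 := by
    have h : e⁻¹ < 1 := inv_lt_one_of_one_lt₀ he1
    have : e⁻¹ < e := lt_trans h he1
    linarith
  have h2 : e^2 - (e^2)⁻¹ ≠ 0 := by
    have h : 1 < e^2 := one_lt_pow₀ he1 two_ne_zero
    have : (e^2)⁻¹ < 1 := inv_lt_one_of_one_lt₀ h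
    nlinarith
  have h3 : 1 - (e^2)⁻¹ ≠ 0 := by
    have h : 1 < e^2 := one_lt_pow₀ he1 two_ne_zero
    have : (e^2)⁻¹ < 1 := inv_lt_one_of_one_lt₀ h
    linarith
  have h4 : 1 - (e^4)⁻¹ ≠ 0 := by
    have h : 1 < e^4 := one_lt_pow₀ he1 (by norm_num)
    have : (e^4)⁻¹ < 1 := inv_lt_one_of_one_lt₀ h
    linarith
  rw [hsinh, hsinh2, hsinh4, hcosh, hcosh2, hcosh4, hm2, hm4, hm6, hm8]
  have he2 : (1:ℝ) < e^2 := one_lt_pow₀ he1 two_ne_zero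
  have he4 : (1:ℝ) < e^4 := one_lt_pow₀ he1 (by norm_num)
  have k1 : (-1 + e^2) ≠ 0 := by nlinarith
  have k2 : (1 - e^4*2 + e^8) ≠ 0 := by nlinarith [sq_nonneg (e^4 - 1), sq_nonneg e]
  have k3 : (-(e^4) + e^6) ≠ 0 := by nlinarith [pow_pos he0 4, pow_pos he0 6]
  have n1 : e*e - 1 ≠ 0 := by nlinarith
  have n2 : e^2*e^2 - 1 ≠ 0 := by nlinarith
  have n3 : e^2 - 1 ≠ 0 := by nlinarith
  have n4 : e^4 - 1 ≠ 0 := by nlinarith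
  field_simp
  ring

set_option maxHeartbeats 1000000 in
lemma eBW_eqD (α : ℝ) (hα : 0 < α) :
    (-1 + 8 * α ^ 2 + Real.cosh (4 * α) - 4 * α * Real.sinh (4 * α))
      * (Real.exp (-(4*α)) * α⁻¹)
    =
    -1 * (Real.exp (-(4*α)) * α⁻¹) + 8 * (α * Real.exp (-(4*α)))
    + ((1 + Real.exp (-(8*α)))/2) * α⁻¹
    - 4 * ((1 - Real.exp (-(8*α)))/2) := by
  have he1 : 1 < Real.exp α := by simpa using Real.exp_lt_exp.mpr hα
  set e := Real.exp α with hedef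
  have he0 : 0 < e := lt_trans one_pos he1
  have hE2 : Real.exp (2*α) = e^2 := by rw [two_mul, Real.exp_add]; ring
  have hE4 : Real.exp (4*α) = e^4 := by
    have h : (4:ℝ)*α = 2*α + 2*α := by ring
    rw [h, Real.exp_add, hE2]; ring
  have hE8 : Real.exp (8*α) = e^8 := by
    have h : (8:ℝ)*α = 4*α + 4*α := by ring
    rw [h, Real.exp_add, hE4]; ring
  have hm4 : Real.exp (-(4*α)) = (e^4)⁻¹ := by rw [Real.exp_neg, hE4]
  have hm8 : Real.exp (-(8*α)) = (e^8)⁻¹ := by rw [Real.exp_neg, hE8]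
  have hsinh4 : Real.sinh (4*α) = (e^4 - (e^4)⁻¹)/2 := by
    rw [Real.sinh_eq, hE4, Real.exp_neg, hE4]
  have hcosh4 : Real.cosh (4*α) = (e^4 + (e^4)⁻¹)/2 := by
    rw [Real.cosh_eq, hE4, Real.exp_neg, hE4]
  have hne : e ≠ 0 := ne_of_gt he0
  have hαne : α ≠ 0 := ne_of_gt hα
  rw [hsinh4, hcosh4, hm4, hm8]
  field_simp

/-- The Benjamin-Whitham coefficient `e_BW(α)` tends to `1` as `α → ∞`. -/
theorem eBW_tendsto_one :
    Filter.Tendsto eBW Filter.atTop (nhds 1) := by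
  have h2 := eBW_exp_lim 2 (by norm_num)
  have h4 := eBW_exp_lim 4 (by norm_num)
  have h6 := eBW_exp_lim 6 (by norm_num)
  have h8 := eBW_exp_lim 8 (by norm_num)
  have m4 := eBW_mul_exp_lim 4 (by norm_num)
  have m8 := eBW_mul_exp_lim 8 (by norm_num)
  have hi : Tendsto (fun α : ℝ => α⁻¹) atTop (nhds 0) := tendsto_inv_atTop_zero
  have ht := eBW_tanh_lim
  -- numerator limit
  have A1 := (h4.mul hi).const_mul (-4 : ℝ)
  have A2 := m4.const_mul (8 : ℝ)
  have A3 := (((h2.add h6).div_const 2).const_mul (8:ℝ)).mul hi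
  have A4 := (((tendsto_const_nhds (x := (1:ℝ))).add h8).div_const 2).const_mul (5:ℝ) |>.mul hi
  have B1 := ((((tendsto_const_nhds (x := (1:ℝ))).add h2).div
      ((tendsto_const_nhds (x := (1:ℝ))).sub h2) (by norm_num)).const_mul (-9:ℝ)).mul h4
  have B2 := (m8.const_mul (72:ℝ)).div
      (((tendsto_const_nhds (x := (1:ℝ))).sub h4).pow 2) (by norm_num)
  have B3 := (((tendsto_const_nhds (x := (1:ℝ))).sub h8).div_const 2).const_mul (2:ℝ)
  have B4 := (ht.const_mul (3:ℝ)).mul h4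
  have LN0 := (((A1.add A2).add A3).add A4).add ((((B1.add B2).sub B3).add B4).const_mul (2:ℝ))
  have LN : Tendsto (fun α : ℝ =>
      -4 * (Real.exp (-(4*α)) * α⁻¹)
      + 8 * (α * Real.exp (-(4*α)))
      + 8 * ((Real.exp (-(2*α)) + Real.exp (-(6*α)))/2) * α⁻¹
      + 5 * ((1 + Real.exp (-(8*α)))/2) * α⁻¹
      + 2 * (-9 * ((1 + Real.exp (-(2*α))) / (1 - Real.exp (-(2*α)))) * Real.exp (-(4*α))
          + 72 * (α * Real.exp (-(8*α))) / (1 - Real.exp (-(4*α)))^2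
          - 2 * ((1 - Real.exp (-(8*α)))/2)
          + 3 * Real.tanh α * Real.exp (-(4*α)))) atTop (nhds (-2)) := by
    convert LN0 using 2 <;> norm_num
  -- denominator limit
  have C1 := (h4.mul hi).const_mul (-1 : ℝ)
  have C2 := m4.const_mul (8 : ℝ)
  have C3 := (((tendsto_const_nhds (x := (1:ℝ))).add h8).div_const 2).mul hi
  have C4 := (((tendsto_const_nhds (x := (1:ℝ))).sub h8).div_const 2).const_mul (4:ℝ)
  have LD0 := ((C1.add C2).add C3).sub C4
  have LD : Tendsto (fun α : ℝ =>
      -1 * (Real.exp (-(4*α)) * α⁻¹) + 8 * (α * Real.exp (-(4*α)))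
      + ((1 + Real.exp (-(8*α)))/2) * α⁻¹
      - 4 * ((1 - Real.exp (-(8*α)))/2)) atTop (nhds (-2)) := by
    convert LD0 using 2 <;> norm_num
  have Lt : Tendsto (fun α : ℝ => Real.tanh α ^ ((3:ℝ)/2)) atTop (nhds 1) := by
    have := ht.rpow_const (p := (3:ℝ)/2) (Or.inl one_ne_zero)
    simpa using this
  have Lfull := LN.div (LD.mul Lt) (by norm_num)
  have hval : (-2 : ℝ) / (-2 * 1) = 1 := by norm_num
  rw [hval] at Lfull
  refine Lfull.congr' ?_
  filter_upwards [eventually_gt_atTop (0:ℝ)] with α hα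
  have hc : Real.exp (-(4*α)) * α⁻¹ ≠ 0 :=
    mul_ne_zero (Real.exp_ne_zero _) (inv_ne_zero (ne_of_gt hα))
  simp only [Pi.div_apply]
  rw [← eBW_eqN α hα, ← eBW_eqD α hα]
  unfold eBW
  have key : ∀ (n d t c : ℝ), c ≠ 0 → (n*c)/((d*c)*t) = n/(d*t) := by
    intro n d t c hc
    rw [mul_right_comm, mul_div_mul_right _ _ hc]
  exact key _ _ _ _ hc
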